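/- The complex ω-Lie algebras B₁ and B₋₁, given on a basis {x,y,z} of a 3-dimensional complex vector space by [x,y] = y, [x,z] = y+z, [y,z] = x, ω(x,y) = ω(x,z) = 0, ω(y,z) = 2 for B₁, and by [x,y] = y, [x,z] = y+z, [y,z] = −x, ω(x,y) = ω(x,z) = 0, ω(y,z) = −2 for B₋₁, are isomorphic as complex ω-Lie algebras. -/
import Mathlib


/-- The bracket of `B₁` on `ℂ³`: the bilinear extension of `[x,y] = y`,
`[x,z] = y + z`, `[y,z] = x` on the standard basis `x = e₀, y = e₁, z = e₂`. -/
def brB1 (u v : Fin 3 → ℂ) : Fin 3 → ℂ :=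
  ![u 1 * v 2 - u 2 * v 1, (u 0 * v 1 - u 1 * v 0) + (u 0 * v 2 - u 2 * v 0),
    u 0 * v 2 - u 2 * v 0]

/-- The form of `B₁`: the bilinear extension of `ω(x,y) = ω(x,z) = 0`, `ω(y,z) = 2`. -/
def omB1 (u v : Fin 3 → ℂ) : ℂ := 2 * (u 1 * v 2 - u 2 * v 1)

/-- The bracket of `B₋₁` on `ℂ³`: the bilinear extension of `[x,y] = y`,
`[x,z] = y + z`, `[y,z] = -x`. -/
def brBm1 (u v : Fin 3 → ℂ) : Fin 3 → ℂ :=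
  ![-(u 1 * v 2 - u 2 * v 1), (u 0 * v 1 - u 1 * v 0) + (u 0 * v 2 - u 2 * v 0),
    u 0 * v 2 - u 2 * v 0]

/-- The form of `B₋₁`: the bilinear extension of `ω(x,y) = ω(x,z) = 0`, `ω(y,z) = -2`. -/
def omBm1 (u v : Fin 3 → ℂ) : ℂ := -2 * (u 1 * v 2 - u 2 * v 1)

/-- The complex ω-Lie algebras `B₁` and `B₋₁` are isomorphic: there is a complex linear
bijection intertwining the brackets and the bilinear forms. -/
theorem B1_iso_Bm1_complex :
    ∃ f : (Fin 3 → ℂ) ≃ₗ[ℂ] (Fin 3 → ℂ),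
      (∀ a b : Fin 3 → ℂ, f (brB1 a b) = brBm1 (f a) (f b)) ∧
      (∀ a b : Fin 3 → ℂ, omBm1 (f a) (f b) = omB1 a b) := by
  refine ⟨{ toFun := fun u => ![u 0, Complex.I * u 1, Complex.I * u 2]
            invFun := fun u => ![u 0, -Complex.I * u 1, -Complex.I * u 2]
            map_add' := ?_
            map_smul' := ?_
            left_inv := ?_
            right_inv := ?_ }, ?_, ?_⟩
  · intro u v; funext i; fin_cases i <;> simp <;> ring
  · intro c u; funext i; fin_cases i <;> simp [smul_eq_mul] <;> ring
  · intro u; funext i; fin_cases i <;>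
      simp [← mul_assoc, Complex.I_mul_I]
  · intro u; funext i; fin_cases i <;>
      simp [← mul_assoc, Complex.I_mul_I]
  · intro a b; funext i; fin_cases i <;>
      simp [brB1, brBm1] <;> ring_nf <;>
      simp [Complex.I_sq] <;> ring
  · intro a b
    simp only [omB1, omBm1, LinearEquiv.coe_mk]
    show -2 * ((Complex.I * a 1) * (Complex.I * b 2) - (Complex.I * a 2) * (Complex.I * b 1)) = _
    ring_nf
    simp [Complex.I_sq]
    ring
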